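/- Let A and B be connected ℕ-graded k-algebras, each generated as a k-algebra by finitely many homogeneous elements of positive degree, and let T = A ⊗_k B be their tensor product k-algebra (A and B need not be commutative). Let M be a left T-module. Then: (i) the set τ_B M = { m ∈ M : there exists n ∈ ℕ with (1 ⊗ b) · m = 0 for all b ∈ B_{≥n} } is a T-submodule of M; and (ii) if every element m ∈ M admits n_1, n_2 ∈ ℕ (depending on m) such that (a ⊗ b) · m = 0 for all a ∈ A_{≥n_1} and all b ∈ B_{≥n_2}, then the quotient module M/τ_B M is A-torsion, i.e. every element of M/τ_B M is annihilated by { a ⊗ 1 : a ∈ A_{≥n} } for some n ∈ ℕ. (So such an M is an extension of an A-torsion module by a B-torsion module.) -/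
import Mathlib


/-!
STATEMENT 2: For connected ℕ-graded `k`-algebras `A`, `B`, finitely generated by homogeneous
elements of positive degree, and a left `A ⊗[k] B`-module `M`:
(i) `τ_B M = { m | ∃ n, (1 ⊗ b) • m = 0 for all b ∈ B_{≥n} }` is a `A ⊗[k] B`-submodule, and
(ii) if every `m ∈ M` is annihilated by some `A_{≥n₁} ⊗ B_{≥n₂}`, then every element of
`M ⧸ τ_B M` is `A`-torsion.
-/

open scoped TensorProduct

/-- The `k`-submodule `A_{≥ n} = ⊕_{m ≥ n} A_m` of a graded algebra. -/
def gradedPiecesGE {k A : Type*} [Field k] [Ring A] [Algebra k A]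
    (𝒜 : ℕ → Submodule k A) (n : ℕ) : Submodule k A :=
  ⨆ (m : ℕ) (_ : n ≤ m), 𝒜 m


lemma gradedPiecesGE_antitone {k A : Type*} [Field k] [Ring A] [Algebra k A]
    (𝒜 : ℕ → Submodule k A) {n n' : ℕ} (h : n ≤ n') :
    gradedPiecesGE 𝒜 n' ≤ gradedPiecesGE 𝒜 n := by
  refine iSup₂_le fun m hm => le_iSup₂ (f := fun m (_ : n ≤ m) => 𝒜 m) m (h.trans hm)

lemma gradedPiecesGE_mul_mem {k B : Type*} [Field k] [Ring B] [Algebra k B]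
    (ℬ : ℕ → Submodule k B) [GradedAlgebra ℬ] {n : ℕ} {b : B}
    (hb : b ∈ gradedPiecesGE ℬ n) (b' : B) : b * b' ∈ gradedPiecesGE ℬ n := by
  unfold gradedPiecesGE at hb ⊢
  rw [iSup_subtype'] at hb ⊢
  induction hb using Submodule.iSup_induction' with
  | mem i z hz =>
    obtain ⟨m, hm⟩ := i
    have hb' : b' ∈ ⨆ j, ℬ j := by
      rw [(DirectSum.Decomposition.isInternal ℬ).submodule_iSup_eq_top]; trivial
    induction hb' using Submodule.iSup_induction' with
    | mem j w hw =>
      exact le_iSup (fun p : {m // n ≤ m} => ℬ p) ⟨m + j, hm.trans (Nat.le_add_right m j)⟩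
        (SetLike.mul_mem_graded hz hw)
    | zero => simp
    | add w w' _ _ h1 h2 => rw [mul_add]; exact Submodule.add_mem _ h1 h2
  | zero => simp
  | add z z' _ _ h1 h2 => rw [add_mul]; exact Submodule.add_mem _ h1 h2

theorem bibi_torsion_is_extension
    {k A B : Type*} [Field k] [Ring A] [Algebra k A] [Ring B] [Algebra k B]
    (𝒜 : ℕ → Submodule k A) [GradedAlgebra 𝒜] (ℬ : ℕ → Submodule k B) [GradedAlgebra ℬ]
    (hconnA : 𝒜 0 = (1 : Submodule k A)) (hconnB : ℬ 0 = (1 : Submodule k B))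
    {r : ℕ} (x : Fin r → A) (degA : Fin r → ℕ)
    (hdegposA : ∀ i, 0 < degA i) (hhomA : ∀ i, x i ∈ 𝒜 (degA i))
    (hgenA : Algebra.adjoin k (Set.range x) = ⊤)
    {s : ℕ} (y : Fin s → B) (degB : Fin s → ℕ)
    (hdegposB : ∀ i, 0 < degB i) (hhomB : ∀ i, y i ∈ ℬ (degB i))
    (hgenB : Algebra.adjoin k (Set.range y) = ⊤)
    {M : Type*} [AddCommGroup M] [Module (A ⊗[k] B) M] :
    ∃ τB : Submodule (A ⊗[k] B) M,
      (∀ m : M, m ∈ τB ↔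
          ∃ n : ℕ, ∀ b ∈ gradedPiecesGE ℬ n, ((1 : A) ⊗ₜ[k] b) • m = 0) ∧
      ((∀ m : M, ∃ n₁ n₂ : ℕ, ∀ a ∈ gradedPiecesGE 𝒜 n₁, ∀ b ∈ gradedPiecesGE ℬ n₂,
            (a ⊗ₜ[k] b) • m = 0) →
        ∀ q : M ⧸ τB, ∃ n : ℕ, ∀ a ∈ gradedPiecesGE 𝒜 n,
            (a ⊗ₜ[k] (1 : B)) • q = 0) := by
  classical
  refine ⟨{ carrier := { m : M | ∃ n : ℕ, ∀ b ∈ gradedPiecesGE ℬ n, ((1 : A) ⊗ₜ[k] b) • m = 0 }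
            add_mem' := ?_
            zero_mem' := ⟨0, fun b _ => smul_zero _⟩
            smul_mem' := ?_ }, fun m => Iff.rfl, ?_⟩
  · rintro m m' ⟨n, hn⟩ ⟨n', hn'⟩
    refine ⟨max n n', fun b hb => ?_⟩
    rw [smul_add, hn b (gradedPiecesGE_antitone ℬ (le_max_left n n') hb),
      hn' b (gradedPiecesGE_antitone ℬ (le_max_right n n') hb), add_zero]
  · rintro t m ⟨n, hn⟩
    refine ⟨n, fun b hb => ?_⟩
    show ((1 : A) ⊗ₜ[k] b) • (t • m) = 0
    induction t using TensorProduct.induction_on with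
    | zero => simp
    | tmul a b' =>
      rw [smul_smul, Algebra.TensorProduct.tmul_mul_tmul, one_mul]
      have : (a ⊗ₜ[k] (b * b') : A ⊗[k] B) = (a ⊗ₜ[k] (1 : B)) * ((1 : A) ⊗ₜ[k] (b * b')) := by
        rw [Algebra.TensorProduct.tmul_mul_tmul, mul_one, one_mul]
      rw [this, mul_smul, hn (b * b') (gradedPiecesGE_mul_mem ℬ hb b'), smul_zero]
    | add t₁ t₂ h1 h2 =>
      rw [add_smul, smul_add, h1, h2, add_zero]
  · intro hM q
    obtain ⟨m, rfl⟩ := Submodule.Quotient.mk_surjective _ q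
    obtain ⟨n₁, n₂, h⟩ := hM m
    refine ⟨n₁, fun a ha => ?_⟩
    rw [← Submodule.Quotient.mk_smul, Submodule.Quotient.mk_eq_zero]
    refine ⟨n₂, fun b hb => ?_⟩
    rw [smul_smul, Algebra.TensorProduct.tmul_mul_tmul, one_mul, mul_one]
    exact h a ha b hb
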